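/- (Flat maximum effect, equal-weights bound.) Let R be a d × d real symmetric positive semidefinite matrix with unit diagonal (R_ii = 1) and nonnegative entries (R_ij ≥ 0). Let w ∈ ℝᵈ have nonnegative entries with Σᵢ w_i = 1, and let v = (1/d, …, 1/d) be the equal-weight vector; suppose vᵀRv > 0 and wᵀRw > 0. Then the correlation between the equal-weight sum and the arbitrarily weighted sum satisfies r(v,w) = vᵀRw / √((vᵀRv)(wᵀRw)) ≥ (1/d) Σᵢ minⱼ R_ij; that is, r(v,w) is bounded below by the smallest row average attainable by picking, for each row i, its minimal entry. -/

import Mathlib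

open Matrix

theorem entry_le_one {d : ℕ} {R : Matrix (Fin d) (Fin d) ℝ}
    (hR : R.PosSemidef) (hdiag : ∀ i, R i i = 1) (i j : Fin d) : R i j ≤ 1 := by
  rcases eq_or_ne i j with h | h
  · exact le_of_eq (h ▸ hdiag i)
  · have hsym : R j i = R i j := by
      have := hR.isHermitian.apply j i
      simpa using this.symm
    have h2 := hR.dotProduct_mulVec_nonneg (Pi.single i 1 - Pi.single j 1)
    simp only [star_trivial, mulVec_sub, dotProduct_sub, sub_dotProduct,
      mulVec_single, RCLike.re_to_real] at h2
    have hcol : ∀ k, (MulOpposite.op (1:ℝ) • R.col k) = fun l => R l k * 1 := by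
      intro k; funext l; simp
    simp only [hcol] at h2
    have e1 : (Pi.single i 1 : Fin d → ℝ) ⬝ᵥ (fun k => R k i * 1) = R i i := by
      simp [single_dotProduct]
    have e2 : (Pi.single i 1 : Fin d → ℝ) ⬝ᵥ (fun k => R k j * 1) = R i j := by
      simp [single_dotProduct]
    have e3 : (Pi.single j 1 : Fin d → ℝ) ⬝ᵥ (fun k => R k i * 1) = R j i := by
      simp [single_dotProduct]
    have e4 : (Pi.single j 1 : Fin d → ℝ) ⬝ᵥ (fun k => R k j * 1) = R j j := by
      simp [single_dotProduct]
    rw [e1, e2, e3, e4, hdiag, hdiag, hsym] at h2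
    linarith

/-- Flat maximum effect, equal-weights bound: if `R` is a symmetric positive
semidefinite correlation matrix with unit diagonal and nonnegative entries,
`w` is a nonnegative weight vector summing to `1`, and `v = (1/d,…,1/d)` is
the equal-weight vector, with `vᵀRv > 0` and `wᵀRw > 0`, then the correlation
`r(v,w) = vᵀRw / √((vᵀRv)(wᵀRw))` between the equal-weight sum and the
arbitrarily weighted sum is bounded below by `(1/d) Σᵢ minⱼ Rᵢⱼ`. -/
theorem flat_maximum_equal_weights (d : ℕ) (R : Matrix (Fin d) (Fin d) ℝ)
    (hR : R.PosSemidef) (hdiag : ∀ i, R i i = 1) (hnonneg : ∀ i j, 0 ≤ R i j)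
    (w : Fin d → ℝ) (hw : ∀ i, 0 ≤ w i) (hwsum : ∑ i, w i = 1)
    (v : Fin d → ℝ) (hv : v = fun _ => 1 / (d : ℝ))
    (hvv : 0 < v ⬝ᵥ (R *ᵥ v)) (hww : 0 < w ⬝ᵥ (R *ᵥ w)) :
    v ⬝ᵥ (R *ᵥ w) / Real.sqrt ((v ⬝ᵥ (R *ᵥ v)) * (w ⬝ᵥ (R *ᵥ w)))
      ≥ (1 / (d : ℝ)) * ∑ i, ⨅ j, R i j := by
  have hd : 0 < d := by
    rcases Nat.eq_zero_or_pos d with h | h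
    · subst h; simp [dotProduct] at hvv
    · exact h
  have hdR : (0 : ℝ) < d := Nat.cast_pos.mpr hd
  haveI : Nonempty (Fin d) := Fin.pos_iff_nonempty.mp hd
  have hle1 : ∀ i j, R i j ≤ 1 := entry_le_one hR hdiag
  -- lower bound for the numerator
  have hmin_le : ∀ i j, (⨅ k, R i k) ≤ R i j := fun i j =>
    ciInf_le (Set.Finite.bddBelow (Set.finite_range _)) j
  have hmin_nonneg : ∀ i, 0 ≤ ⨅ k, R i k := fun i =>
    le_ciInf (fun j => hnonneg i j)
  set B := (1 / (d : ℝ)) * ∑ i, ⨅ j, R i j with hB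
  have hBnonneg : 0 ≤ B := by
    apply mul_nonneg (by positivity)
    exact Finset.sum_nonneg fun i _ => hmin_nonneg i
  have hnum : B ≤ v ⬝ᵥ (R *ᵥ w) := by
    have : v ⬝ᵥ (R *ᵥ w) = (1 / (d : ℝ)) * ∑ i, ∑ j, R i j * w j := by
      subst hv
      simp [dotProduct, mulVec, Finset.mul_sum]
    rw [this, hB]
    apply mul_le_mul_of_nonneg_left _ (by positivity)
    apply Finset.sum_le_sum
    intro i _
    calc ⨅ j, R i j = (⨅ j, R i j) * ∑ j, w j := by rw [hwsum, mul_one]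
      _ = ∑ j, (⨅ k, R i k) * w j := by rw [Finset.mul_sum]
      _ ≤ ∑ j, R i j * w j :=
        Finset.sum_le_sum fun j _ => mul_le_mul_of_nonneg_right (hmin_le i j) (hw j)
  -- denominator bounds
  have hvv1 : v ⬝ᵥ (R *ᵥ v) ≤ 1 := by
    have : v ⬝ᵥ (R *ᵥ v) = ∑ i, ∑ j, (1 / (d : ℝ)) * (R i j * (1 / (d : ℝ))) := by
      subst hv; simp [dotProduct, mulVec, Finset.mul_sum]
    rw [this]
    calc ∑ i : Fin d, ∑ j : Fin d, (1 / (d : ℝ)) * (R i j * (1 / (d : ℝ)))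
        ≤ ∑ i : Fin d, ∑ j : Fin d, (1 / (d : ℝ)) * (1 * (1 / (d : ℝ))) := by
          apply Finset.sum_le_sum; intro i _
          apply Finset.sum_le_sum; intro j _
          have h1 : (0:ℝ) ≤ 1 / (d : ℝ) := by positivity
          exact mul_le_mul_of_nonneg_left
            (mul_le_mul_of_nonneg_right (hle1 i j) h1) h1
      _ = 1 := by
          simp [Finset.sum_const]
          field_simp
  have hww1 : w ⬝ᵥ (R *ᵥ w) ≤ 1 := by
    have he : w ⬝ᵥ (R *ᵥ w) = ∑ i, ∑ j, w i * (R i j * w j) := by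
      simp [dotProduct, mulVec, Finset.mul_sum]
    rw [he]
    calc ∑ i, ∑ j, w i * (R i j * w j)
        ≤ ∑ i, ∑ j, w i * (1 * w j) := by
          apply Finset.sum_le_sum; intro i _
          apply Finset.sum_le_sum; intro j _
          exact mul_le_mul_of_nonneg_left
            (mul_le_mul_of_nonneg_right (hle1 i j) (hw j)) (hw i)
      _ = 1 := by
          simp only [one_mul, ← Finset.mul_sum, hwsum, mul_one]
  have hden_pos : 0 < Real.sqrt ((v ⬝ᵥ (R *ᵥ v)) * (w ⬝ᵥ (R *ᵥ w))) :=
    Real.sqrt_pos.mpr (mul_pos hvv hww)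
  have hden_le : Real.sqrt ((v ⬝ᵥ (R *ᵥ v)) * (w ⬝ᵥ (R *ᵥ w))) ≤ 1 := by
    rw [show (1 : ℝ) = Real.sqrt 1 from (Real.sqrt_one).symm]
    apply Real.sqrt_le_sqrt
    nlinarith
  rw [ge_iff_le, le_div_iff₀ hden_pos]
  calc B * Real.sqrt ((v ⬝ᵥ (R *ᵥ v)) * (w ⬝ᵥ (R *ᵥ w))) ≤ B * 1 :=
        mul_le_mul_of_nonneg_left hden_le hBnonneg
    _ = B := mul_one B
    _ ≤ v ⬝ᵥ (R *ᵥ w) := hnum
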